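/- With F = Ṽ_q [Φ 0] Ψ as in the waterfilling construction, the MMSE error covariance satisfies R_ee = U Ψᴴ (I_M + Φ̆ᵀ Λ̃_q Φ̆)^{-1} Ψ Uᴴ, where Φ̆ = [Φ 0_{q×(M−q)}], Λ̃_q = diag(λ1,…,λq), and U = B + I; and the arithmetic MSE tr(R_ee)/M is bounded below by q^{q/M} (p0 + Σ_{j=1}^q λ_j^{-1})^{−q/M} ∏_{j=1}^q λ_j^{−1/M}. -/

import Mathlib

open Matrix Finset ComplexOrder

/-- With the waterfilling precoder `F = Ṽ_q [Φ 0] Ψ`, the MMSE error covariance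
satisfies `R_ee = U Ψᴴ (I + Φ̆ᵀ Λ̃_q Φ̆)⁻¹ Ψ Uᴴ` (`U = B + I`), and the arithmetic
MSE `tr(R_ee)/M` is bounded below by
`q^(q/M) (p0 + Σ_{j=1}^q λ_j⁻¹)^(−q/M) ∏_{j=1}^q λ_j^(−1/M)`. -/
theorem stmt14 (P K M q : ℕ) (hM : 0 < M) (hq : 0 < q) (hqM : q ≤ M) (hqK : q ≤ K)
    (p0 : ℝ) (hp0 : 0 < p0)
    (H : Matrix (Fin P) (Fin K) ℂ)
    (Rvv : Matrix (Fin P) (Fin P) ℂ) (hRvv : Rvv.PosDef)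
    (V : Matrix (Fin K) (Fin K) ℂ) (hV : Vᴴ * V = 1)
    (μ : ℕ → ℝ) (hpos : ∀ i < K, 0 < μ i)
    (hmono : ∀ i j : ℕ, i ≤ j → j < K → μ j ≤ μ i)
    (hA : Hᴴ * Rvv⁻¹ * H =
      V * Matrix.diagonal (fun i : Fin K => (μ (i : ℕ) : ℂ)) * Vᴴ)
    (φ : Fin q → ℝ) (hφnn : ∀ i, 0 ≤ φ i)
    (hφ : ∀ i : Fin q, φ i ^ 2 =
      (p0 + ∑ j ∈ Finset.range q, (μ j)⁻¹) / q - (μ (i : ℕ))⁻¹)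
    (Ψ : Matrix (Fin M) (Fin M) ℂ) (hΨ : Ψᴴ * Ψ = 1)
    (Pad : Matrix (Fin q) (Fin M) ℂ)
    (hPad : ∀ (i : Fin q) (j : Fin M),
      Pad i j = if h : (j : ℕ) < q then (if (i : ℕ) = (j : ℕ) then (φ i : ℂ) else 0) else 0)
    (F : Matrix (Fin K) (Fin M) ℂ)
    (hF : F = V.submatrix id (Fin.castLE hqK) * Pad * Ψ)
    (B : Matrix (Fin M) (Fin M) ℂ)
    (hB : ∀ i j : Fin M, j ≤ i → B i j = 0) :
    (B + 1) * (1 + Fᴴ * Hᴴ * Rvv⁻¹ * H * F)⁻¹ * (B + 1)ᴴ =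
      (B + 1) * Ψᴴ *
        (1 + Padᵀ * Matrix.diagonal (fun i : Fin q => (μ (i : ℕ) : ℂ)) * Pad)⁻¹ *
        Ψ * (B + 1)ᴴ ∧
    ((B + 1) * (1 + Fᴴ * Hᴴ * Rvv⁻¹ * H * F)⁻¹ * (B + 1)ᴴ).trace.re / M ≥
      (q : ℝ) ^ ((q : ℝ) / M) *
        (p0 + ∑ j ∈ Finset.range q, (μ j)⁻¹) ^ (-(q : ℝ) / M) *
        ∏ j ∈ Finset.range q, (μ j) ^ (-(1:ℝ) / M) := by
  classical
  set S : ℝ := p0 + ∑ j ∈ Finset.range q, (μ j)⁻¹ with hSdef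
  set c : Fin q → Fin K := Fin.castLE hqK with hc
  set Λq : Matrix (Fin q) (Fin q) ℂ :=
    Matrix.diagonal (fun i : Fin q => (μ (i : ℕ) : ℂ)) with hΛq
  set ΛK : Matrix (Fin K) (Fin K) ℂ :=
    Matrix.diagonal (fun i : Fin K => (μ (i : ℕ) : ℂ)) with hΛK
  have hμpos : ∀ j, j < q → 0 < μ j := fun j hj => hpos j (lt_of_lt_of_le hj hqK)
  have hS : 0 < S := by
    have : 0 ≤ ∑ j ∈ Finset.range q, (μ j)⁻¹ :=
      Finset.sum_nonneg fun j hj =>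
        inv_nonneg.mpr (hμpos j (Finset.mem_range.mp hj)).le
    have := add_pos_of_pos_of_nonneg hp0 this
    simpa [hSdef] using this
  -- simplified formula for Pad
  have hPad' : ∀ (a : Fin q) (j : Fin M),
      Pad a j = if ((a : ℕ) = (j : ℕ)) then (φ a : ℂ) else 0 := by
    intro a j
    rw [hPad a j]
    by_cases hj : (j : ℕ) < q
    · simp [hj]
    · have : ¬((a : ℕ) = (j : ℕ)) := fun h => hj (h ▸ a.isLt)
      simp [hj, this]
  -- transpose = conjTranspose for Pad
  have hPadH : Padᴴ = Padᵀ := by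
    ext j a
    simp only [Matrix.conjTranspose_apply, Matrix.transpose_apply, hPad']
    split_ifs <;> simp
  -- the middle diagonalization identity
  have hVq1 : (Vᴴ).submatrix c id * V = (1 : Matrix (Fin K) (Fin K) ℂ).submatrix c id := by
    ext i j
    simp [Matrix.mul_apply, ← hV]
  have hVq2 : Vᴴ * V.submatrix id c = (1 : Matrix (Fin K) (Fin K) ℂ).submatrix id c := by
    ext i j
    simp [Matrix.mul_apply, ← hV]
  have h1Λ : (1 : Matrix (Fin K) (Fin K) ℂ).submatrix c id * ΛK = ΛK.submatrix c id := by
    ext i j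
    simp [Matrix.mul_apply, Matrix.one_apply]
  have hΛ1 : ΛK.submatrix c id * (1 : Matrix (Fin K) (Fin K) ℂ).submatrix id c
      = ΛK.submatrix c c := by
    ext i j
    simp [Matrix.mul_apply, Matrix.one_apply]
  have hcc : ΛK.submatrix c c = Λq := by
    rw [hΛK, Matrix.submatrix_diagonal _ _ (Fin.castLE_injective hqK)]
    congr 1
  have middle : (V.submatrix id c)ᴴ * (V * ΛK * Vᴴ) * V.submatrix id c = Λq := by
    rw [Matrix.conjTranspose_submatrix]
    calc (Vᴴ).submatrix c id * (V * ΛK * Vᴴ) * V.submatrix id c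
        = ((Vᴴ).submatrix c id * V) * ΛK * (Vᴴ * V.submatrix id c) := by
          simp only [Matrix.mul_assoc]
      _ = (1 : Matrix (Fin K) (Fin K) ℂ).submatrix c id * ΛK *
            (1 : Matrix (Fin K) (Fin K) ℂ).submatrix id c := by rw [hVq1, hVq2]
      _ = ΛK.submatrix c c := by rw [h1Λ, hΛ1]
      _ = Λq := hcc
  have key : Fᴴ * Hᴴ * Rvv⁻¹ * H * F = Ψᴴ * (Padᵀ * Λq * Pad) * Ψ := by
    have h0 : Fᴴ * Hᴴ * Rvv⁻¹ * H * F = Fᴴ * (Hᴴ * Rvv⁻¹ * H) * F := by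
      simp only [Matrix.mul_assoc]
    rw [h0, hA, hF, Matrix.conjTranspose_mul, Matrix.conjTranspose_mul, hPadH]
    have h5 : ∀ X : Matrix (Fin q) (Fin M) ℂ,
        (V.submatrix id c)ᴴ * (V * (ΛK * (Vᴴ * (V.submatrix id c * X)))) = Λq * X := by
      intro X
      conv_rhs => rw [← middle]
      simp only [Matrix.mul_assoc]
    simp only [Matrix.mul_assoc, h5]
  -- the diagonal matrix D
  set d : Fin M → ℝ := fun j => if (j : ℕ) < q then μ (j : ℕ) * S / q else 1 with hd
  have hdj : ∀ j : Fin M, (j : ℕ) < q → d j = μ (j : ℕ) * S / q := by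
    intro j hj; simp [hd, hj]
  have hdj1 : ∀ j : Fin M, ¬((j : ℕ) < q) → d j = 1 := by
    intro j hj; simp [hd, hj]
  have hdpos : ∀ j, 0 < d j := by
    intro j
    by_cases hj : (j : ℕ) < q
    · rw [hdj j hj]
      have := hμpos _ hj
      positivity
    · rw [hdj1 j hj]; norm_num
  have Dc : (1 : Matrix (Fin M) (Fin M) ℂ) + Padᵀ * Λq * Pad
      = Matrix.diagonal (fun j => (d j : ℂ)) := by
    ext j k
    have hmulapp : (Padᵀ * Λq * Pad) j k
        = ∑ a : Fin q, Pad a j * ((μ (a : ℕ) : ℂ) * Pad a k) := by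
      rw [Matrix.mul_assoc, Matrix.mul_apply]
      refine Finset.sum_congr rfl fun a _ => ?_
      rw [Matrix.transpose_apply, hΛq, Matrix.diagonal_mul]
    rw [Matrix.add_apply, hmulapp]
    by_cases hj : (j : ℕ) < q
    · rw [Finset.sum_eq_single (⟨(j : ℕ), hj⟩ : Fin q)]
      · by_cases hjk : j = k
        · subst hjk
          have hcoe : ((⟨(j : ℕ), hj⟩ : Fin q) : ℕ) = (j : ℕ) := rfl
          rw [hPad', if_pos hcoe, Matrix.one_apply_eq, Matrix.diagonal_apply_eq, hdj j hj]
          have hr : (1 : ℝ) + φ ⟨(j : ℕ), hj⟩ * (μ (j : ℕ) * φ ⟨(j : ℕ), hj⟩)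
              = μ (j : ℕ) * S / q := by
            have h2 : φ ⟨(j : ℕ), hj⟩ ^ 2 = S / q - (μ (j : ℕ))⁻¹ := hφ _
            have hμ : (μ (j : ℕ)) ≠ 0 := (hμpos _ hj).ne'
            have hqne : (q : ℝ) ≠ 0 := Nat.cast_ne_zero.mpr hq.ne'
            have h3 : φ ⟨(j : ℕ), hj⟩ * (μ (j : ℕ) * φ ⟨(j : ℕ), hj⟩)
                = μ (j : ℕ) * (φ ⟨(j : ℕ), hj⟩ ^ 2) := by ring
            rw [h3, h2]
            field_simp
            ring
          rw [← hr]
          push_cast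
          ring
        · have hjk' : ¬((j : ℕ) = (k : ℕ)) := fun h => hjk (Fin.ext h)
          rw [hPad' _ j, hPad' _ k]
          have hcoe : ((⟨(j : ℕ), hj⟩ : Fin q) : ℕ) = (j : ℕ) := rfl
          rw [if_neg (fun h => hjk' (hcoe ▸ h))]
          rw [Matrix.one_apply_ne hjk, Matrix.diagonal_apply_ne _ hjk]
          ring
      · intro b _ hb
        have : ¬((b : ℕ) = (j : ℕ)) := fun h => hb (Fin.ext h)
        rw [hPad' b j, if_neg this]
        ring
      · exact fun h => absurd (Finset.mem_univ _) h
    · have hzero : ∀ a : Fin q, Pad a j * ((μ (a : ℕ) : ℂ) * Pad a k) = 0 := by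
        intro a
        have : ¬((a : ℕ) = (j : ℕ)) := fun h => hj (h ▸ a.isLt)
        rw [hPad' a j, if_neg this]
        ring
      rw [Finset.sum_eq_zero fun a _ => hzero a, add_zero]
      by_cases hjk : j = k
      · subst hjk
        rw [Matrix.one_apply_eq, Matrix.diagonal_apply_eq, hd]
        simp [hj]
      · rw [Matrix.one_apply_ne hjk, Matrix.diagonal_apply_ne _ hjk]
  -- first conjunct
  set Dmat : Matrix (Fin M) (Fin M) ℂ := 1 + Padᵀ * Λq * Pad with hDmat
  have hSum : (1 : Matrix (Fin M) (Fin M) ℂ) + Fᴴ * Hᴴ * Rvv⁻¹ * H * F = Ψᴴ * Dmat * Ψ := by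
    rw [key, hDmat, Matrix.mul_add, Matrix.add_mul, Matrix.mul_one, hΨ]
  have hinv : (Ψᴴ * Dmat * Ψ)⁻¹ = Ψᴴ * Dmat⁻¹ * Ψ := by
    rw [Matrix.mul_inv_rev, Matrix.mul_inv_rev, Matrix.inv_eq_left_inv hΨ,
      Matrix.inv_eq_right_inv hΨ]
    simp only [Matrix.mul_assoc]
  have conj1 : (B + 1) * (1 + Fᴴ * Hᴴ * Rvv⁻¹ * H * F)⁻¹ * (B + 1)ᴴ =
      (B + 1) * Ψᴴ * Dmat⁻¹ * Ψ * (B + 1)ᴴ := by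
    rw [hSum, hinv]
    simp only [Matrix.mul_assoc]
  refine ⟨conj1, ?_⟩
  -- Part 2: the trace bound
  have hDinv : Dmat⁻¹ = Matrix.diagonal (fun j => (((d j)⁻¹ : ℝ) : ℂ)) := by
    apply Matrix.inv_eq_right_inv
    rw [Dc, Matrix.diagonal_mul_diagonal]
    have hone : (fun j => ((d j : ℝ) : ℂ) * (((d j)⁻¹ : ℝ) : ℂ)) = fun _ => (1 : ℂ) := by
      funext j
      rw [← Complex.ofReal_mul, mul_inv_cancel₀ (hdpos j).ne', Complex.ofReal_one]
    rw [hone, Matrix.diagonal_one]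
  set R : Matrix (Fin M) (Fin M) ℂ :=
    ((B + 1) * Ψᴴ) * Matrix.diagonal (fun j => (((d j)⁻¹ : ℝ) : ℂ)) * ((B + 1) * Ψᴴ)ᴴ with hR
  have hRe : (B + 1) * (1 + Fᴴ * Hᴴ * Rvv⁻¹ * H * F)⁻¹ * (B + 1)ᴴ = R := by
    rw [conj1, hDinv, hR, Matrix.conjTranspose_mul, Matrix.conjTranspose_conjTranspose]
    simp only [Matrix.mul_assoc]
  have hdiagPSD : (Matrix.diagonal (fun j => (((d j)⁻¹ : ℝ) : ℂ))).PosSemidef := by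
    rw [Matrix.posSemidef_diagonal_iff]
    intro i
    exact Complex.zero_le_real.mpr (inv_nonneg.mpr (hdpos i).le)
  have hRps : R.PosSemidef := hdiagPSD.mul_mul_conjTranspose_same _
  have hH : R.IsHermitian := hRps.1
  set e : Fin M → ℝ := hH.eigenvalues with he
  have hen : ∀ i, 0 ≤ e i := fun i => hRps.eigenvalues_nonneg i
  -- trace = sum of eigenvalues
  have htr : R.trace = ((∑ i, e i : ℝ) : ℂ) := by
    conv_lhs => rw [hH.spectral_theorem, Unitary.conjStarAlgAut_apply]
    rw [Matrix.trace_mul_cycle]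
    have hu : star (hH.eigenvectorUnitary : Matrix (Fin M) (Fin M) ℂ) *
        (hH.eigenvectorUnitary : Matrix (Fin M) (Fin M) ℂ) = 1 :=
      (Unitary.mem_iff.mp hH.eigenvectorUnitary.2).1
    rw [hu, Matrix.one_mul, Matrix.trace_diagonal]
    push_cast
    rfl
  have htre : R.trace.re = ∑ i, e i := by rw [htr, Complex.ofReal_re]
  -- determinant computations
  have hdetB : (B + 1 : Matrix (Fin M) (Fin M) ℂ).det = 1 := by
    have hbt : (B + 1 : Matrix (Fin M) (Fin M) ℂ).BlockTriangular id := by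
      intro i j hij
      have hne : i ≠ j := ne_of_gt hij
      rw [Matrix.add_apply, hB i j (le_of_lt hij), Matrix.one_apply_ne hne, add_zero]
    rw [Matrix.det_of_upperTriangular hbt]
    refine Finset.prod_eq_one fun i _ => ?_
    rw [Matrix.add_apply, hB i i le_rfl, Matrix.one_apply_eq, zero_add]
  have hdetR : R.det = ((∏ j : Fin M, (d j)⁻¹ : ℝ) : ℂ) := by
    rw [hR, Matrix.det_mul, Matrix.det_mul, Matrix.conjTranspose_mul,
      Matrix.conjTranspose_conjTranspose, Matrix.det_mul, Matrix.det_mul, hdetB,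
      Matrix.det_diagonal]
    have hΨdet : Ψᴴ.det * Ψ.det = 1 := by
      rw [← Matrix.det_mul, hΨ, Matrix.det_one]
    have hBdet : (B + 1 : Matrix (Fin M) (Fin M) ℂ)ᴴ.det = 1 := by
      rw [Matrix.det_conjTranspose, hdetB, star_one]
    rw [hBdet]
    push_cast
    calc 1 * Ψᴴ.det * (∏ j : Fin M, ((d j : ℂ))⁻¹) * (Ψ.det * 1)
        = (Ψᴴ.det * Ψ.det) * ∏ j : Fin M, ((d j : ℂ))⁻¹ := by ring
      _ = ∏ j : Fin M, ((d j : ℂ))⁻¹ := by rw [hΨdet, one_mul]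
  have heig : ∏ i, e i = ∏ j : Fin M, (d j)⁻¹ := by
    have h1 : ((∏ i, e i : ℝ) : ℂ) = ((∏ j : Fin M, (d j)⁻¹ : ℝ) : ℂ) := by
      rw [← hdetR, hH.det_eq_prod_eigenvalues]
      push_cast
      rfl
    exact_mod_cast h1
  -- reduce product of d to the range-q product
  set T : ℝ := ∏ j ∈ Finset.range q, (μ j * S / q)⁻¹ with hT
  have hTpos : 0 < T := by
    rw [hT]
    apply Finset.prod_pos
    intro j hj
    exact inv_pos.mpr (div_pos (mul_pos (hμpos j (Finset.mem_range.mp hj)) hS)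
      (by exact_mod_cast hq))
  have hprodd : ∏ j : Fin M, (d j)⁻¹ = T := by
    have h1 : ∏ j : Fin M, (d j)⁻¹
        = ∏ j ∈ Finset.range M, (if j < q then μ j * S / q else 1)⁻¹ := by
      rw [← Fin.prod_univ_eq_prod_range (fun j => (if j < q then μ j * S / q else 1)⁻¹) M]
    rw [h1, hT]
    rw [← Finset.prod_subset (Finset.range_subset_range.mpr hqM)
      (fun x _ hx => by simp [Finset.mem_range.not.mp hx])]
    refine Finset.prod_congr rfl fun j hj => ?_
    rw [if_pos (Finset.mem_range.mp hj)]
  -- AM-GM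
  have hMne : (M : ℝ) ≠ 0 := Nat.cast_ne_zero.mpr hM.ne'
  have amgm : ∏ i : Fin M, e i ^ ((1 : ℝ) / M) ≤ ∑ i : Fin M, ((1 : ℝ) / M) * e i := by
    refine Real.geom_mean_le_arith_mean_weighted Finset.univ _ _
      (fun i _ => by positivity) ?_ (fun i _ => hen i)
    rw [Finset.sum_const, Finset.card_univ, Fintype.card_fin, nsmul_eq_mul]
    field_simp
  have hlhs : ∏ i : Fin M, e i ^ ((1 : ℝ) / M) = T ^ ((1 : ℝ) / M) := by
    rw [Real.finset_prod_rpow _ _ (fun i _ => hen i), heig, hprodd]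
  have hrhs : ∑ i : Fin M, ((1 : ℝ) / M) * e i = R.trace.re / M := by
    rw [← Finset.mul_sum, htre]
    ring
  -- identify T^(1/M) with the stated lower bound
  have hqpos : (0 : ℝ) < q := Nat.cast_pos.mpr hq
  have hTbound : T ^ ((1 : ℝ) / M)
      = (q : ℝ) ^ ((q : ℝ) / M) * S ^ (-(q : ℝ) / M)
        * ∏ j ∈ Finset.range q, (μ j) ^ (-(1:ℝ) / M) := by
    rw [hT, ← Real.finset_prod_rpow _ _ (fun j hj => by
      have := hμpos j (Finset.mem_range.mp hj); positivity)]
    have hfac : ∀ j ∈ Finset.range q,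
        ((μ j * S / q)⁻¹) ^ ((1 : ℝ) / M)
          = (μ j) ^ (-(1:ℝ) / M) * ((S / q)⁻¹ ^ ((1 : ℝ) / M)) := by
      intro j hj
      have hμj := hμpos j (Finset.mem_range.mp hj)
      have h1 : (μ j * S / q)⁻¹ = (μ j)⁻¹ * (S / q)⁻¹ := by
        rw [mul_div_assoc, mul_inv]
      rw [h1, Real.mul_rpow (by positivity) (by positivity)]
      congr 1
      rw [Real.inv_rpow hμj.le, ← Real.rpow_neg hμj.le, neg_div]
    rw [Finset.prod_congr rfl hfac, Finset.prod_mul_distrib, Finset.prod_const,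
      Finset.card_range]
    have hSq : (0 : ℝ) < S / q := by positivity
    have h2 : ((S / q)⁻¹ ^ ((1 : ℝ) / M)) ^ q = (S / q) ^ (-(q : ℝ) / M) := by
      rw [← Real.rpow_natCast (((S / q)⁻¹) ^ ((1 : ℝ) / M)) q,
        ← Real.rpow_mul (by positivity), Real.inv_rpow hSq.le,
        ← Real.rpow_neg hSq.le]
      congr 1
      field_simp
    have h3 : (S / q) ^ (-(q : ℝ) / M) = S ^ (-(q : ℝ) / M) * (q : ℝ) ^ ((q : ℝ) / M) := by
      rw [Real.div_rpow hS.le hqpos.le]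
      rw [div_eq_mul_inv, ← Real.rpow_neg hqpos.le]
      congr 1
      rw [neg_div, neg_neg]
    rw [h2, h3]
    ring
  -- assemble
  rw [ge_iff_le, hRe, ← hTbound, ← hlhs]
  calc ∏ i : Fin M, e i ^ ((1 : ℝ) / M)
      ≤ ∑ i : Fin M, ((1 : ℝ) / M) * e i := amgm
    _ = R.trace.re / M := hrhs
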